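/- Let 0 ≤ i ≤ 1 be a real number. There exist constants 0 < c ≤ C such that for every integer n ≥ 3, c · n · log n ≤ W(n;i,2) ≤ C · n · log n, where W(n;i,2) := n · ∑_{q=1}^{n−1} (q^{−i} / H_{n−1}(i)) · M₁(q,2). (This is the Odlyzko case of the paper's traffic-load theorem: W(i,d) = Θ(n log n) for d = 2 and 0 ≤ i ≤ 1, reproducing Odlyzko's Law V ∝ n log n.) -/

import Mathlib

/-- `H m α = ∑_{j=1}^m j^{-α}` (generalized harmonic number). -/
noncomputable def H (m : ℕ) (α : ℝ) : ℝ := ∑ j ∈ Finset.Icc 1 m, (j : ℝ) ^ (-α)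

/-- Mean of the truncated Zipf distribution with exponent `d` on `{1,…,q}`. -/
noncomputable def M1 (q : ℕ) (d : ℝ) : ℝ :=
  (∑ r ∈ Finset.Icc 1 q, (r : ℝ) ^ (1 - d)) / (∑ r ∈ Finset.Icc 1 q, (r : ℝ) ^ (-d))

/-- Expected total number of data destinations over all `n` sessions. -/
noncomputable def W (n : ℕ) (i d : ℝ) : ℝ :=
  n * ∑ q ∈ Finset.Icc 1 (n - 1), ((q : ℝ) ^ (-i) / H (n - 1) i) * M1 q d

open Finset Real

lemma H_pos {m : ℕ} (hm : 1 ≤ m) (i : ℝ) : 0 < H m i := by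
  apply Finset.sum_pos
  · intro j hj
    simp only [Finset.mem_Icc] at hj
    have : (0:ℝ) < j := by exact_mod_cast hj.1
    exact Real.rpow_pos_of_pos this _
  · exact ⟨1, by simp [hm]⟩

lemma H_nonneg (m : ℕ) (i : ℝ) : 0 ≤ H m i := by
  apply Finset.sum_nonneg
  intro j hj
  positivity

lemma rpow_neg_two (x : ℝ) (hx : 0 < x) : x ^ (-2:ℝ) = (x ^ 2)⁻¹ := by
  rw [show (-2:ℝ) = -((2:ℕ):ℝ) by norm_num, Real.rpow_neg hx.le, Real.rpow_natCast]

lemma H_two_le {q : ℕ} (hq : 1 ≤ q) : H q 2 ≤ 2 - 1 / q := by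
  induction q, hq using Nat.le_induction with
  | base => simp [H]; norm_num
  | succ n hn ih =>
    rw [H, Finset.sum_Icc_succ_top (by omega)]
    rw [show (∑ j ∈ Finset.Icc 1 n, (j : ℝ) ^ (-(2:ℝ))) = H n 2 from rfl]
    have hn1 : (0:ℝ) < n := by exact_mod_cast hn
    have h2 : ((n:ℝ)+1) ^ (-(2:ℝ)) = (((n:ℝ)+1) ^ 2)⁻¹ := by
      push_cast
      exact rpow_neg_two _ (by positivity)
    push_cast
    rw [h2]
    have key : (((n:ℝ)+1) ^ 2)⁻¹ ≤ 1/n - 1/((n:ℝ)+1) := by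
      have h3 : 1/(n:ℝ) - 1/((n:ℝ)+1) = ((n:ℝ)*((n:ℝ)+1))⁻¹ := by
        field_simp
        ring
      rw [h3]
      gcongr
      nlinarith
    linarith
lemma H_two_le' (q : ℕ) : H q 2 ≤ 2 := by
  rcases Nat.eq_zero_or_pos q with h | h
  · simp [h, H]
  · have := H_two_le h
    have : (0:ℝ) < q := by exact_mod_cast h
    have h1 : 0 ≤ 1 / (q:ℝ) := by positivity
    linarith [H_two_le h]

lemma one_le_H_two {q : ℕ} (hq : 1 ≤ q) : 1 ≤ H q 2 := by
  have : ((1:ℕ):ℝ) ^ (-(2:ℝ)) ≤ H q 2 := by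
    apply Finset.single_le_sum (f := fun j : ℕ => (j:ℝ) ^ (-(2:ℝ)))
    · intro j hj; positivity
    · simp [hq]
  simpa using this

lemma H_one_eq (q : ℕ) : H q 1 = (harmonic q : ℝ) := by
  rw [H, harmonic_eq_sum_Icc]
  push_cast
  refine Finset.sum_congr rfl fun j hj => ?_
  simp only [Finset.mem_Icc] at hj
  have : (0:ℝ) < j := by exact_mod_cast hj.1
  rw [Real.rpow_neg_one]

lemma H_one_le (q : ℕ) : H q 1 ≤ 1 + Real.log q := by
  rw [H_one_eq]; exact harmonic_le_one_add_log q

lemma le_H_one (q : ℕ) : Real.log (q + 1) ≤ H q 1 := by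
  rw [H_one_eq]
  have := log_add_one_le_harmonic q
  push_cast at this ⊢
  exact this

lemma H_one_mono {q q' : ℕ} (h : q ≤ q') : H q 1 ≤ H q' 1 := by
  apply Finset.sum_le_sum_of_subset_of_nonneg (Finset.Icc_subset_Icc_right h)
  intro j _ _; positivity

lemma M1_two (q : ℕ) : M1 q 2 = H q 1 / H q 2 := by
  simp only [M1, H]
  norm_num

lemma block_lemma (i : ℝ) (hi0 : 0 ≤ i) (hi1 : i ≤ 1) {q s : ℕ} (hq : 1 ≤ q)
    (hs : q + 1 ≤ s) :
    (q:ℝ) ^ (-i) ≤ 2 * ∑ p ∈ Finset.Ico (q*s) ((q+1)*s), (p:ℝ) ^ (-i) := by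
  have hs1 : 1 ≤ s := by omega
  have hq0 : (1:ℝ) ≤ q := by exact_mod_cast hq
  have hs0 : (1:ℝ) ≤ s := by exact_mod_cast hs1
  -- step A : q^{-i} ≤ 2 * (q+1)^{-i}
  have hA : (q:ℝ) ^ (-i) ≤ 2 * ((q:ℝ)+1) ^ (-i) := by
    have h2q : ((q:ℝ)+1) ≤ 2*q := by linarith
    have h1 : ((2:ℝ)*q) ^ (-i) ≤ ((q:ℝ)+1) ^ (-i) :=
      Real.rpow_le_rpow_of_nonpos (by positivity) h2q (by linarith)
    have h2 : ((2:ℝ)*q) ^ (-i) = (2:ℝ) ^ (-i) * (q:ℝ) ^ (-i) :=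
      Real.mul_rpow (by norm_num) (by linarith)
    have h3 : (2:ℝ) ^ (-(1:ℝ)) ≤ (2:ℝ) ^ (-i) :=
      Real.rpow_le_rpow_of_exponent_le (by norm_num) (by linarith)
    have h4 : (2:ℝ) ^ (-(1:ℝ)) = 1/2 := by
      rw [Real.rpow_neg_one]; norm_num
    have h5 := mul_le_mul_of_nonneg_right h3 (Real.rpow_nonneg (by linarith : (0:ℝ) ≤ q) (-i))
    rw [h4] at h5
    linarith
  -- step B : (q+1)^{-i} ≤ s * ((q+1)*s)^{-i}
  have hB : ((q:ℝ)+1) ^ (-i) ≤ (s:ℝ) * ((((q+1)*s : ℕ)):ℝ) ^ (-i) := by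
    have hcast : ((((q+1)*s : ℕ)):ℝ) = ((q:ℝ)+1) * s := by push_cast; ring
    rw [hcast, Real.mul_rpow (by positivity) (by linarith)]
    have h5 : (1:ℝ) ≤ (s:ℝ) * (s:ℝ) ^ (-i) := by
      have he : (s:ℝ) * (s:ℝ) ^ (-i) = (s:ℝ) ^ (1 + -i) := by
        rw [Real.rpow_add (by linarith), Real.rpow_one]
      rw [he]
      calc (1:ℝ) = (s:ℝ) ^ (0:ℝ) := by rw [Real.rpow_zero]
        _ ≤ (s:ℝ) ^ (1 + -i) := Real.rpow_le_rpow_of_exponent_le hs0 (by linarith)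
    have h6 : (0:ℝ) ≤ ((q:ℝ)+1) ^ (-i) := Real.rpow_nonneg (by linarith) _
    nlinarith [Real.rpow_nonneg (by linarith : (0:ℝ) ≤ (s:ℝ)) (-i)]
  -- step C : sum ≥ s * min
  have hC : (s:ℝ) * ((((q+1)*s : ℕ)):ℝ) ^ (-i) ≤ ∑ p ∈ Finset.Ico (q*s) ((q+1)*s), (p:ℝ) ^ (-i) := by
    have hcard : (Finset.Ico (q*s) ((q+1)*s)).card = s := by
      rw [Nat.card_Ico]; ring_nf; omega
    have := Finset.card_nsmul_le_sum (Finset.Ico (q*s) ((q+1)*s))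
      (fun p : ℕ => (p:ℝ) ^ (-i)) (((((q+1)*s : ℕ)):ℝ) ^ (-i)) ?_
    · rw [hcard, nsmul_eq_mul] at this
      exact this
    · intro p hp
      simp only [Finset.mem_Ico] at hp
      have hqs : 1 * 1 ≤ q * s := Nat.mul_le_mul hq hs1
      have hp1 : 1 ≤ p := by omega
      have hp0 : (0:ℝ) < p := by
        have : (1:ℝ) ≤ p := by exact_mod_cast hp1
        linarith
      apply Real.rpow_le_rpow_of_nonpos hp0
      · exact_mod_cast hp.2.le
      · linarith
  linarith

lemma tail_lemma (i : ℝ) (hi0 : 0 ≤ i) (hi1 : i ≤ 1) {m : ℕ} (hm : 2 ≤ m) :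
    H m i ≤ 3 * ∑ q ∈ Finset.Ioc (Nat.sqrt m - 1) m, (q:ℝ) ^ (-i) := by
  set s := Nat.sqrt m with hs
  have hs1 : 1 ≤ s := by
    have := Nat.sqrt_le_sqrt (show 1 ≤ m by omega)
    simpa using this
  have hss : s * s ≤ m := Nat.sqrt_le m
  have hsm : s - 1 ≤ m := by
    have := Nat.sqrt_le_self m; omega
  have hsplit := Finset.sum_Ioc_consecutive (fun q : ℕ => (q:ℝ) ^ (-i))
    (Nat.zero_le (s-1)) hsm
  have hHm : H m i = ∑ q ∈ Finset.Ioc 0 m, (q:ℝ) ^ (-i) := by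
    rw [H, ← Finset.Icc_add_one_left_eq_Ioc]
    rfl
  have hhead : ∑ q ∈ Finset.Ioc 0 (s-1), (q:ℝ) ^ (-i)
      ≤ 2 * ∑ p ∈ Finset.Ioc (s-1) m, (p:ℝ) ^ (-i) := by
    have h1 : ∑ q ∈ Finset.Ioc 0 (s-1), (q:ℝ) ^ (-i)
        ≤ ∑ q ∈ Finset.Ioc 0 (s-1), 2 * ∑ p ∈ Finset.Ico (q*s) ((q+1)*s), (p:ℝ) ^ (-i) := by
      apply Finset.sum_le_sum
      intro q hq
      simp only [Finset.mem_Ioc] at hq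
      exact block_lemma i hi0 hi1 hq.1 (by omega)
    have hdisj : (↑(Finset.Ioc 0 (s-1)) : Set ℕ).PairwiseDisjoint
        (fun q => Finset.Ico (q*s) ((q+1)*s)) := by
      intro a _ b _ hab
      apply Finset.disjoint_left.mpr
      intro p hpa hpb
      simp only [Finset.mem_Ico] at hpa hpb
      rcases Nat.lt_or_ge a b with h | h
      · have : (a+1)*s ≤ b*s := Nat.mul_le_mul h (le_refl s)
        omega
      · have hba : b + 1 ≤ a := by omega
        have : (b+1)*s ≤ a*s := Nat.mul_le_mul hba (le_refl s)
        omega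
    have h2 : ∑ q ∈ Finset.Ioc 0 (s-1), ∑ p ∈ Finset.Ico (q*s) ((q+1)*s), (p:ℝ) ^ (-i)
        = ∑ p ∈ (Finset.Ioc 0 (s-1)).biUnion (fun q => Finset.Ico (q*s) ((q+1)*s)), (p:ℝ) ^ (-i) :=
      (Finset.sum_biUnion hdisj).symm
    have h3 : ∑ p ∈ (Finset.Ioc 0 (s-1)).biUnion (fun q => Finset.Ico (q*s) ((q+1)*s)), (p:ℝ) ^ (-i)
        ≤ ∑ p ∈ Finset.Ioc (s-1) m, (p:ℝ) ^ (-i) := by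
      apply Finset.sum_le_sum_of_subset_of_nonneg
      · intro p hp
        simp only [Finset.mem_biUnion, Finset.mem_Ioc, Finset.mem_Ico] at hp ⊢
        obtain ⟨q, ⟨hq0, hqs⟩, hp1, hp2⟩ := hp
        constructor
        · have : 1*s ≤ q*s := Nat.mul_le_mul hq0 (le_refl s)
          omega
        · have : (q+1)*s ≤ s*s := Nat.mul_le_mul (by omega) (le_refl s)
          omega
      · intro p _ _
        positivity
    calc ∑ q ∈ Finset.Ioc 0 (s-1), (q:ℝ) ^ (-i)
        ≤ ∑ q ∈ Finset.Ioc 0 (s-1), 2 * ∑ p ∈ Finset.Ico (q*s) ((q+1)*s), (p:ℝ) ^ (-i) := h1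
      _ = 2 * ∑ q ∈ Finset.Ioc 0 (s-1), ∑ p ∈ Finset.Ico (q*s) ((q+1)*s), (p:ℝ) ^ (-i) := by
          rw [Finset.mul_sum]
      _ ≤ 2 * ∑ p ∈ Finset.Ioc (s-1) m, (p:ℝ) ^ (-i) := by
          rw [h2]; linarith
  rw [hHm, ← hsplit]
  linarith

theorem W_odlyzko (i : ℝ) (hi0 : 0 ≤ i) (hi1 : i ≤ 1) :
    ∃ c C : ℝ, 0 < c ∧ c ≤ C ∧
      ∀ n : ℕ, 3 ≤ n →
        c * (n : ℝ) * Real.log n ≤ W n i 2 ∧ W n i 2 ≤ C * (n : ℝ) * Real.log n := by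
  refine ⟨1/24, 2, by norm_num, by norm_num, ?_⟩
  intro n hn
  set m : ℕ := n - 1 with hmdef
  have hm2 : 2 ≤ m := by omega
  have hm1 : 1 ≤ m := by omega
  have hmn : m ≤ n := by omega
  have hHm : 0 < H m i := H_pos hm1 i
  have hn3 : (3:ℝ) ≤ n := by exact_mod_cast hn
  have hmcast : (m:ℝ) = (n:ℝ) - 1 := by
    rw [hmdef]; push_cast [Nat.cast_sub (by omega : 1 ≤ n)]; ring
  have hlogn1 : 1 ≤ Real.log n := by
    rw [Real.le_log_iff_exp_le (by linarith)]
    have := Real.exp_one_lt_d9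
    norm_num at this
    linarith
  have hWeq : W n i 2 = n * ∑ q ∈ Finset.Icc 1 m, ((q:ℝ) ^ (-i) / H m i) * M1 q 2 := rfl
  constructor
  · -- lower bound
    set s : ℕ := Nat.sqrt m with hsdef
    have hs1 : 1 ≤ s := by
      have := Nat.sqrt_le_sqrt (show 1 ≤ m by omega)
      simpa [hsdef] using this
    have hsm : s ≤ m := Nat.sqrt_le_self m
    -- tail mass
    have htail := tail_lemma i hi0 hi1 hm2
    set B : ℝ := ∑ q ∈ Finset.Ioc (s-1) m, (q:ℝ) ^ (-i) with hBdef
    have hB3 : H m i ≤ 3 * B := htail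
    have hBnonneg : 0 ≤ B := Finset.sum_nonneg fun q _ => by positivity
    -- H s 1 ≥ (1/2) log m
    have hHs : Real.log m / 2 ≤ H s 1 := by
      have h1 : Real.sqrt m ≤ (s:ℝ) + 1 := by
        have h2 : (m:ℝ) ≤ ((s:ℝ)+1)^2 := by
          have := Nat.lt_succ_sqrt m
          have : (m:ℝ) < ((s:ℝ)+1) * ((s:ℝ)+1) := by exact_mod_cast this
          nlinarith
        calc Real.sqrt m ≤ Real.sqrt (((s:ℝ)+1)^2) := Real.sqrt_le_sqrt h2
          _ = (s:ℝ)+1 := Real.sqrt_sq (by positivity)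
      have h2 : Real.log (Real.sqrt m) ≤ Real.log ((s:ℝ)+1) := by
        apply Real.log_le_log _ h1
        apply Real.sqrt_pos.mpr
        have : (2:ℝ) ≤ m := by exact_mod_cast hm2
        linarith
      rw [Real.log_sqrt (by positivity)] at h2
      exact h2.trans (le_H_one s)
    -- termwise lower bound on the sum
    have hsub : Finset.Ioc (s-1) m ⊆ Finset.Icc 1 m := by
      intro q hq
      simp only [Finset.mem_Ioc, Finset.mem_Icc] at hq ⊢
      omega
    have hstep1 : ∑ q ∈ Finset.Ioc (s-1) m, ((q:ℝ) ^ (-i) / H m i) * (H s 1 / 2)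
        ≤ ∑ q ∈ Finset.Icc 1 m, ((q:ℝ) ^ (-i) / H m i) * M1 q 2 := by
      refine le_trans (Finset.sum_le_sum ?_) (Finset.sum_le_sum_of_subset_of_nonneg hsub ?_)
      · intro q hq
        simp only [Finset.mem_Ioc] at hq
        have hq1 : 1 ≤ q := by omega
        have hqs : s ≤ q := by omega
        have hM : H s 1 / 2 ≤ M1 q 2 := by
          rw [M1_two]
          have h1 : H s 1 ≤ H q 1 := H_one_mono hqs
          have h2 : H q 2 ≤ 2 := H_two_le' q
          have h3 : 0 < H q 2 := lt_of_lt_of_le one_pos (one_le_H_two hq1)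
          have h4 : 0 ≤ H q 1 := H_nonneg q 1
          calc H s 1 / 2 ≤ H q 1 / 2 := by gcongr
            _ ≤ H q 1 / H q 2 := by gcongr
        have hw : 0 ≤ (q:ℝ) ^ (-i) / H m i :=
          div_nonneg (Real.rpow_nonneg (Nat.cast_nonneg q) _) hHm.le
        exact mul_le_mul_of_nonneg_left hM hw
      · intro q hq _
        have hq1 : 1 ≤ q := by simp only [Finset.mem_Icc] at hq; omega
        have : 0 ≤ M1 q 2 := by
          rw [M1_two]
          exact div_nonneg (H_nonneg q 1) (H_nonneg q 2)
        have hw : 0 ≤ (q:ℝ) ^ (-i) / H m i :=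
          div_nonneg (Real.rpow_nonneg (Nat.cast_nonneg q) _) hHm.le
        exact mul_nonneg hw this
    have hsum : ∑ q ∈ Finset.Ioc (s-1) m, ((q:ℝ) ^ (-i) / H m i) * (H s 1 / 2)
        = (H s 1 / 2) * (B / H m i) := by
      rw [hBdef, Finset.sum_div, Finset.mul_sum]
      refine Finset.sum_congr rfl fun q _ => ?_
      field_simp
    have hBH : (1:ℝ)/3 ≤ B / H m i := by
      rw [le_div_iff₀ hHm]
      linarith
    have hlogm0 : 0 ≤ Real.log m := by
      apply Real.log_nonneg
      have : (2:ℝ) ≤ m := by exact_mod_cast hm2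
      linarith
    have hkey : Real.log m / 12 ≤ (H s 1 / 2) * (B / H m i) := by
      have h1 : Real.log m / 4 ≤ H s 1 / 2 := by linarith
      calc Real.log m / 12 = (Real.log m / 4) * (1/3) := by ring
        _ ≤ (H s 1 / 2) * (B / H m i) :=
          mul_le_mul h1 hBH (by norm_num) (by linarith)
    -- log m ≥ (1/2) log n
    have hlogm : Real.log n / 2 ≤ Real.log m := by
      have h1 : Real.sqrt n ≤ (m:ℝ) := by
        rw [hmcast]
        calc Real.sqrt n ≤ Real.sqrt (((n:ℝ)-1)^2) := Real.sqrt_le_sqrt (by nlinarith)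
          _ = (n:ℝ)-1 := Real.sqrt_sq (by linarith)
      have h2 : Real.log (Real.sqrt n) ≤ Real.log m := by
        apply Real.log_le_log _ h1
        apply Real.sqrt_pos.mpr
        linarith
      rwa [Real.log_sqrt (by linarith)] at h2
    have hS : Real.log n / 24 ≤ ∑ q ∈ Finset.Icc 1 m, ((q:ℝ) ^ (-i) / H m i) * M1 q 2 := by
      rw [hsum] at hstep1
      linarith
    rw [hWeq]
    calc (1:ℝ)/24 * n * Real.log n = (n:ℝ) * (Real.log n / 24) := by ring
      _ ≤ (n:ℝ) * ∑ q ∈ Finset.Icc 1 m, ((q:ℝ) ^ (-i) / H m i) * M1 q 2 := by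
          apply mul_le_mul_of_nonneg_left hS (by positivity)
  · -- upper bound
    have hstep : ∑ q ∈ Finset.Icc 1 m, ((q:ℝ) ^ (-i) / H m i) * M1 q 2
        ≤ ∑ q ∈ Finset.Icc 1 m, ((q:ℝ) ^ (-i) / H m i) * (2 * Real.log n) := by
      apply Finset.sum_le_sum
      intro q hq
      simp only [Finset.mem_Icc] at hq
      have hq1 : 1 ≤ q := hq.1
      have hM : M1 q 2 ≤ 2 * Real.log n := by
        rw [M1_two]
        have h1 : H q 1 / H q 2 ≤ H q 1 := div_le_self (H_nonneg q 1) (one_le_H_two hq1)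
        have h2 : H q 1 ≤ 1 + Real.log q := H_one_le q
        have h3 : Real.log q ≤ Real.log n := by
          apply Real.log_le_log
          · exact_mod_cast hq1
          · exact_mod_cast le_trans hq.2 hmn
        linarith
      have hw : 0 ≤ (q:ℝ) ^ (-i) / H m i :=
        div_nonneg (Real.rpow_nonneg (Nat.cast_nonneg q) _) hHm.le
      exact mul_le_mul_of_nonneg_left hM hw
    have heq : ∑ q ∈ Finset.Icc 1 m, ((q:ℝ) ^ (-i) / H m i) * (2 * Real.log n)
        = 2 * Real.log n := by
      rw [← Finset.sum_mul]
      have : ∑ q ∈ Finset.Icc 1 m, ((q:ℝ) ^ (-i) / H m i) = 1 := by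
        rw [← Finset.sum_div]
        exact div_self (ne_of_gt hHm)
      rw [this, one_mul]
    rw [hWeq]
    calc (n:ℝ) * ∑ q ∈ Finset.Icc 1 m, ((q:ℝ) ^ (-i) / H m i) * M1 q 2
        ≤ (n:ℝ) * (2 * Real.log n) := by
          apply mul_le_mul_of_nonneg_left _ (by positivity)
          rw [← heq]; exact hstep
      _ = 2 * n * Real.log n := by ring
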